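/- Let G be a finite connected undirected weighted graph and fix a clustering with centers such that each node u has d_u = dist(u, c_u) ≤ R. Let π be a shortest path in G between two cluster centers of total weight w_π, and suppose the nodes of π belong to at most k distinct clusters. Then in the quotient graph G_C (edge between clusters of u,v with weight w(u,v)+d_u+d_v for each G-edge crossing clusters), the clusters of the two endpoints of π are connected by a path of total weight at most w_π + 2Rk. -/

import Mathlib

/-- `l` is a walk from `u` to `v` in the graph with edge relation `E`. -/
def WalkFrom {V : Type*} (E : V → V → Prop) (u v : V) (l : List V) : Prop :=
  l ≠ [] ∧ l.Chain' E ∧ l.head? = some u ∧ l.getLast? = some v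

/-- total weight of a walk given by the list of its vertices -/
def wgt {V : Type*} (w : V → V → ℝ) (l : List V) : ℝ :=
  ((l.zip l.tail).map fun p => w p.1 p.2).sum

/-- weighted shortest-path distance -/
noncomputable def gdist {V : Type*} (E : V → V → Prop) (w : V → V → ℝ) (u v : V) : ℝ :=
  sInf {x | ∃ l, WalkFrom E u v l ∧ wgt w l = x}

/-- edge relation of the quotient graph -/
def EC {V : Type*} {τ : ℕ} (E : V → V → Prop) (cl : V → Fin τ) :
    Fin τ → Fin τ → Prop :=
  fun i j => i ≠ j ∧ ∃ u v, E u v ∧ cl u = i ∧ cl v = j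

/-- weight of a quotient edge: minimum over crossing edges `(u,v)` of
`w(u,v) + d_u + d_v` -/
noncomputable def wC {V : Type*} {τ : ℕ} (E : V → V → Prop) (w : V → V → ℝ)
    (cl : V → Fin τ) (ctr : Fin τ → V) : Fin τ → Fin τ → ℝ :=
  fun i j => sInf {x | ∃ u v, E u v ∧ cl u = i ∧ cl v = j ∧
    x = w u v + gdist E w u (ctr i) + gdist E w v (ctr j)}

section Aux

variable {V : Type*} {τ : ℕ}

lemma wgt_cons₂ (w : V → V → ℝ) (a b : V) (t : List V) :
    wgt w (a :: b :: t) = w a b + wgt w (b :: t) := by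
  simp [wgt]

lemma wgt_nonneg (E : V → V → Prop) (w : V → V → ℝ)
    (hpos : ∀ u v, E u v → 0 < w u v) :
    ∀ l : List V, l.Chain' E → 0 ≤ wgt w l
  | [], _ => by simp [wgt]
  | [a], _ => by simp [wgt]
  | a :: b :: t, h => by
    rw [wgt_cons₂]
    have h1 : E a b := (List.isChain_cons_cons.mp h).1
    have h2 := wgt_nonneg E w hpos (b :: t) (List.isChain_cons_cons.mp h).2
    have h3 := (hpos a b h1).le
    linarith

lemma gdist_nonneg (E : V → V → Prop) (w : V → V → ℝ)
    (hpos : ∀ u v, E u v → 0 < w u v) (u v : V) : 0 ≤ gdist E w u v := by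
  apply Real.sInf_nonneg
  rintro x ⟨l, ⟨_, hch, _, _⟩, rfl⟩
  exact wgt_nonneg E w hpos l hch

lemma wgt_split (E : V → V → Prop) (w : V → V → ℝ)
    (hpos : ∀ u v, E u v → 0 < w u v) :
    ∀ (l₁ : List V) (u v : V) (t : List V),
      (l₁ ++ u :: v :: t).Chain' E →
      w u v + wgt w (v :: t) ≤ wgt w (l₁ ++ u :: v :: t)
  | [], u, v, t, _ => by rw [List.nil_append, wgt_cons₂]
  | a :: l₁, u, v, t, h => by
    obtain ⟨c, m', hm⟩ := List.exists_cons_of_ne_nil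
      (List.append_ne_nil_of_right_ne_nil l₁ (List.cons_ne_nil u (v :: t)))
    rw [List.cons_append, hm] at h ⊢
    rw [wgt_cons₂]
    have hEac : E a c := (List.isChain_cons_cons.mp h).1
    have hch : (l₁ ++ u :: v :: t).Chain' E := by
      rw [hm]; exact (List.isChain_cons_cons.mp h).2
    have IH := wgt_split E w hpos l₁ u v t hch
    rw [hm] at IH
    have := (hpos a c hEac).le
    linarith

lemma split_lastocc (cl : V → Fin τ) :
    ∀ (l : List V) (C : Fin τ), C ∈ l.map cl →
      ∃ l₁ u l₂, l = l₁ ++ u :: l₂ ∧ cl u = C ∧ ∀ x ∈ l₂, cl x ≠ C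
  | [], C, h => by simp at h
  | a :: t, C, h => by
    by_cases ht : C ∈ t.map cl
    · obtain ⟨l₁, u, l₂, h1, h2, h3⟩ := split_lastocc cl t C ht
      exact ⟨a :: l₁, u, l₂, by rw [h1]; rfl, h2, h3⟩
    · have ha : cl a = C := by
        simp only [List.map_cons, List.mem_cons] at h
        tauto
      refine ⟨[], a, t, rfl, ha, fun x hx hc => ht ?_⟩
      rw [List.mem_map]; exact ⟨x, hx, hc⟩

lemma key (E : V → V → Prop) (w : V → V → ℝ)
    (hpos : ∀ u v, E u v → 0 < w u v)
    (cl : V → Fin τ) (ctr : Fin τ → V)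
    (R : ℝ) (hR0 : 0 ≤ R) (hR : ∀ u, gdist E w u (ctr (cl u)) ≤ R) :
    ∀ n (l : List V) (a b : V), l.length ≤ n → l.head? = some a →
      l.getLast? = some b → l.Chain' E →
      ∃ L, WalkFrom (EC E cl) (cl a) (cl b) L ∧
        wgt (wC E w cl ctr) L ≤ wgt w l + 2 * R * ((l.map cl).toFinset.card) := by
  have hbdd : ∀ i j : Fin τ, ∀ x ∈ {x | ∃ u v, E u v ∧ cl u = i ∧ cl v = j ∧
      x = w u v + gdist E w u (ctr i) + gdist E w v (ctr j)}, (0:ℝ) ≤ x := by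
    rintro i j x ⟨u, v, hE, _, _, rfl⟩
    have := (hpos u v hE).le
    have := gdist_nonneg E w hpos u (ctr i)
    have := gdist_nonneg E w hpos v (ctr j)
    linarith
  intro n
  induction n with
  | zero =>
    intro l a b hlen hhead _ _
    cases l with
    | nil => simp at hhead
    | cons x t => simp at hlen
  | succ n IH =>
    intro l a b hlen hhead hlast hch
    cases l with
    | nil => simp at hhead
    | cons a' t =>
      have ha' : a = a' := by simpa using hhead.symm
      subst ha'
      have hC : cl a ∈ ((a :: t).map cl) := by simp
      obtain ⟨l₁, u, l₂, hsplit, hu, hclean⟩ := split_lastocc cl (a :: t) (cl a) hC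
      cases l₂ with
      | nil =>
        -- last occurrence is the end: cl b = cl a, take singleton walk
        have hub : u = b := by
          rw [hsplit, List.getLast?_concat] at hlast
          exact (Option.some_inj.mp hlast)
        subst hub
        refine ⟨[cl a], ⟨List.cons_ne_nil _ _, List.isChain_singleton _, rfl, ?_⟩, ?_⟩
        · simp [hu]
        · have h0 : wgt (wC E w cl ctr) [cl a] = 0 := by simp [wgt]
          rw [h0]
          have h1 := wgt_nonneg E w hpos (a :: t) hch
          have h2 : (0:ℝ) ≤ 2 * R * ((((a :: t)).map cl).toFinset.card) := by
            positivity
          linarith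
      | cons v t₂ =>
        -- jump across edge (u, v) into a new cluster
        have hch2 : (u :: v :: t₂).Chain' E := by
          rw [hsplit] at hch
          exact (List.isChain_append.mp hch).2.1
        have hEuv : E u v := (List.isChain_cons_cons.mp hch2).1
        have hchv : (v :: t₂).Chain' E := (List.isChain_cons_cons.mp hch2).2
        have hlast2 : (v :: t₂).getLast? = some b := by
          rw [hsplit, List.getLast?_append] at hlast
          simpa [List.getLast?_cons_cons] using hlast
        have hlen2 : (v :: t₂).length ≤ n := by
          rw [hsplit] at hlen
          simp only [List.length_append, List.length_cons] at hlen ⊢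
          omega
        obtain ⟨L', ⟨hL'ne, hL'ch, hL'h, hL'l⟩, hL'w⟩ :=
          IH (v :: t₂) v b hlen2 rfl hlast2 hchv
        obtain ⟨x, L'', hL''⟩ := List.exists_cons_of_ne_nil hL'ne
        have hx : x = cl v := by rw [hL''] at hL'h; simpa using hL'h
        subst hx
        have hne : cl a ≠ cl v := (hclean v (by simp)).symm
        have hEC : EC E cl (cl a) (cl v) := ⟨hne, u, v, hEuv, hu, rfl⟩
        refine ⟨cl a :: L', ⟨List.cons_ne_nil _ _, ?_, rfl, ?_⟩, ?_⟩
        · refine List.isChain_cons.mpr ?_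
          refine ⟨?_, hL'ch⟩
          intro y hy
          rw [hL''] at hy; simp at hy; subst hy
          exact hEC
        · rw [hL'', List.getLast?_cons_cons, ← hL'']
          exact hL'l
        · -- weight bound
          have hwC : wC E w cl ctr (cl a) (cl v) ≤ w u v + 2 * R := by
            have hmem : w u v + gdist E w u (ctr (cl a)) + gdist E w v (ctr (cl v)) ∈
                {x | ∃ u' v', E u' v' ∧ cl u' = cl a ∧ cl v' = cl v ∧
                  x = w u' v' + gdist E w u' (ctr (cl a)) + gdist E w v' (ctr (cl v))} :=
              ⟨u, v, hEuv, hu, rfl, rfl⟩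
            have hle := csInf_le ⟨0, fun x hx => hbdd _ _ x hx⟩ hmem
            have h1 : gdist E w u (ctr (cl a)) ≤ R := by rw [← hu]; exact hR u
            have h2 : gdist E w v (ctr (cl v)) ≤ R := hR v
            calc wC E w cl ctr (cl a) (cl v) ≤ _ := hle
              _ ≤ w u v + 2 * R := by linarith
          have hwgtL : wgt (wC E w cl ctr) (cl a :: L') =
              wC E w cl ctr (cl a) (cl v) + wgt (wC E w cl ctr) L' := by
            rw [hL'', wgt_cons₂]
          -- cardinality
          have hsub : ((v :: t₂).map cl).toFinset ⊆
              (((a :: t)).map cl).toFinset.erase (cl a) := by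
            intro y hy
            simp only [List.mem_toFinset, List.mem_map] at hy
            obtain ⟨z, hz, rfl⟩ := hy
            refine Finset.mem_erase.mpr ⟨hclean z hz, ?_⟩
            simp only [List.mem_toFinset, List.mem_map]
            exact ⟨z, by rw [hsplit]; simp [hz], rfl⟩
          have hcard : ((v :: t₂).map cl).toFinset.card + 1 ≤
              (((a :: t)).map cl).toFinset.card := by
            have h1 := Finset.card_le_card hsub
            have h2 : (((a :: t)).map cl).toFinset.card ≥ 1 := by
              refine Finset.card_pos.mpr ⟨cl a, ?_⟩
              simpa using hC
            rw [Finset.card_erase_of_mem (by simpa using hC)] at h1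
            omega
          have hcardR : ((((v :: t₂)).map cl).toFinset.card : ℝ) + 1 ≤
              ((((a :: t)).map cl).toFinset.card : ℝ) := by exact_mod_cast hcard
          have hws : w u v + wgt w (v :: t₂) ≤ wgt w (a :: t) := by
            rw [hsplit]; exact wgt_split E w hpos l₁ u v t₂ (by rw [← hsplit]; exact hch)
          have hmul := mul_le_mul_of_nonneg_left hcardR
            (by linarith : (0:ℝ) ≤ 2 * R)
          rw [hwgtL]
          calc wC E w cl ctr (cl a) (cl v) + wgt (wC E w cl ctr) L'
              ≤ (w u v + 2 * R) + (wgt w (v :: t₂)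
                + 2 * R * (((v :: t₂).map cl).toFinset.card)) := by linarith
            _ ≤ wgt w (a :: t) + 2 * R * ((((a :: t)).map cl).toFinset.card) := by
                nlinarith [hmul, hws]

end Aux

/-- If a shortest path `π` of weight `w_π` between two cluster centers meets at
most `k` distinct clusters, then the corresponding clusters are joined in the
quotient graph by a path of weight at most `w_π + 2Rk`. -/
theorem stmt16 {V : Type*} [Fintype V] [DecidableEq V]
    (E : V → V → Prop) (w : V → V → ℝ)
    (hsym : ∀ u v, E u v → E v u) (hwsym : ∀ u v, w u v = w v u)
    (hpos : ∀ u v, E u v → 0 < w u v)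
    (hconn : ∀ u v : V, ∃ l, WalkFrom E u v l)
    (τ : ℕ) (cl : V → Fin τ) (ctr : Fin τ → V)
    (hctr : ∀ i, cl (ctr i) = i)
    (R : ℝ) (hR : ∀ u, gdist E w u (ctr (cl u)) ≤ R)
    (i j : Fin τ) (l : List V)
    (hl : WalkFrom E (ctr i) (ctr j) l)
    (hshort : wgt w l = gdist E w (ctr i) (ctr j))
    (k : ℕ) (hk : (l.map cl).toFinset.card ≤ k) :
    ∃ L : List (Fin τ), WalkFrom (EC E cl) i j L ∧
      wgt (wC E w cl ctr) L ≤ wgt w l + 2 * R * k := by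
  obtain ⟨hne, hch, hhead, hlast⟩ := hl
  have hR0 : 0 ≤ R :=
    le_trans (gdist_nonneg E w hpos (ctr i) (ctr (cl (ctr i)))) (hR (ctr i))
  obtain ⟨L, hLwalk, hLw⟩ := key E w hpos cl ctr R hR0 hR l.length l (ctr i) (ctr j)
    le_rfl hhead hlast hch
  rw [hctr i, hctr j] at hLwalk
  refine ⟨L, hLwalk, le_trans hLw ?_⟩
  have hcast : ((l.map cl).toFinset.card : ℝ) ≤ (k : ℝ) := by exact_mod_cast hk
  nlinarith [hcast, hR0]
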